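/- arXiv:1412.8737 — 2 statements merged into one kernel-verified Lean document; each statement's English description precedes it below -/
import Mathlib

section
/- Let $0 \to S \to \mathbb{Z}^k \to A \to 0$ be a short exact sequence of abelian groups. Then the minimal number of generators in an invariant factor decomposition of $A$ (the number of invariant factors of $A$) is strictly smaller than $k$ if and only if there exists an element $a \in S$ that is primitive in $\mathbb{Z}^k$. -/
/-- The number of invariant factors of a finitely generated abelian group `A`:
the minimal number `r` of cyclic summands in a decomposition
`A ≅ ℤ/m₁ ⊕ ⋯ ⊕ ℤ/m_r` with `m₁ ∣ m₂ ∣ ⋯ ∣ m_r` (where `ℤ/0 = ℤ`). -/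
noncomputable def invariantFactorCount (A : Type*) [AddCommGroup A] : ℕ :=
  sInf {r : ℕ | ∃ m : Fin r → ℕ, (∀ i j : Fin r, i ≤ j → m i ∣ m j) ∧
    Nonempty (A ≃+ ((i : Fin r) → ZMod (m i)))}

/-- An element `a` of `ℤ^k` is primitive if `ℤ → ℤ^k`, `1 ↦ a`, is a split
monomorphism, i.e. there is `g : ℤ^k → ℤ` with `g a = 1`. -/
def IsPrimitive {k : ℕ} (a : Fin k → ℤ) : Prop :=
  ∃ g : (Fin k → ℤ) →+ ℤ, g a = 1


lemma addHom_zmod_ext {n : ℕ} {A : Type*} [AddGroup A] {f g : ZMod n →+ A}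
    (h : f 1 = g 1) : f = g := by
  ext x
  obtain ⟨c, rfl⟩ := ZMod.intCast_surjective x
  have hc : ((c : ℤ) : ZMod n) = c • (1 : ZMod n) := by simp [zsmul_eq_mul]
  rw [hc, map_zsmul, map_zsmul, h]

/-- hom `ℤ →+ ZMod m × ZMod n`, `x ↦ (p*x, q*x)`. -/
private def intPairHom (p q : ℤ) (m n : ℕ) : ℤ →+ ZMod m × ZMod n :=
  AddMonoidHom.mk' (fun x => (((p * x : ℤ) : ZMod m), ((q * x : ℤ) : ZMod n)))
    (by intro x y; simp [mul_add])

@[simp] private lemma intPairHom_apply (p q : ℤ) (m n : ℕ) (x : ℤ) :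
    intPairHom p q m n x = (((p * x : ℤ) : ZMod m), ((q * x : ℤ) : ZMod n)) := rfl

lemma zmod_pair_equiv (a b : ℕ) :
    Nonempty ((ZMod a × ZMod b) ≃+ (ZMod (Nat.gcd a b) × ZMod (Nat.lcm a b))) := by
  rcases Nat.eq_zero_or_pos a with ha | ha
  · subst ha; rw [Nat.gcd_zero_left, Nat.lcm_zero_left]; exact ⟨AddEquiv.prodComm⟩
  rcases Nat.eq_zero_or_pos b with hb | hb
  · subst hb; rw [Nat.gcd_zero_right, Nat.lcm_zero_right]; exact ⟨AddEquiv.refl _⟩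
  set g := Nat.gcd a b with hgdef
  have hg : 0 < g := Nat.gcd_pos_of_pos_left _ ha
  set l := Nat.lcm a b with hldef
  obtain ⟨a', ha'⟩ : g ∣ a := Nat.gcd_dvd_left a b
  obtain ⟨b', hb'⟩ : g ∣ b := Nat.gcd_dvd_right a b
  set u := Nat.gcdA a b with hu
  set v := Nat.gcdB a b with hv
  have hbez : (g : ℤ) = a * u + b * v := Nat.gcd_eq_gcd_ab a b
  have hA : (a : ℤ) = (g : ℤ) * a' := by exact_mod_cast ha'
  have hB : (b : ℤ) = (g : ℤ) * b' := by exact_mod_cast hb'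
  have h2 : (a : ℤ) * u + b * v = (g : ℤ) * (u * a' + v * b') := by rw [hA, hB]; ring
  have hone : (u * a' + v * b' : ℤ) = 1 := by
    have := hbez.trans h2
    have hgne : (g : ℤ) ≠ 0 := by exact_mod_cast hg.ne'
    nlinarith [this]
  have hgl : g * l = a * b := Nat.gcd_mul_lcm a b
  have hla : l = a * b' := by
    apply Nat.eq_of_mul_eq_mul_left hg
    rw [hgl, ha', hb']; ring
  have hlb : l = a' * b := by
    apply Nat.eq_of_mul_eq_mul_left hg
    rw [hgl, ha']; ring
  -- forward map Φ : ZMod a × ZMod b →+ ZMod g × ZMod l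
  -- Φ(x, y) = (x + y, -v*b'*x + u*a'*y)
  have hker1 : intPairHom 1 (-(v * b')) g l (a : ℤ) = 0 := by
    have h1 : ((a : ℤ) : ZMod g) = 0 := by
      rw [ZMod.intCast_zmod_eq_zero_iff_dvd]
      exact_mod_cast Nat.gcd_dvd_left a b
    have h2' : ((-(v * b') * a : ℤ) : ZMod l) = 0 := by
      rw [ZMod.intCast_zmod_eq_zero_iff_dvd]
      refine ⟨-v, ?_⟩
      have : (l : ℤ) = a * b' := by exact_mod_cast hla
      rw [this]; ring
    simp only [intPairHom_apply, one_mul]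
    exact Prod.ext h1 h2'
  have hker2 : intPairHom 1 (u * a') g l (b : ℤ) = 0 := by
    have h1 : ((1 * b : ℤ) : ZMod g) = 0 := by
      rw [ZMod.intCast_zmod_eq_zero_iff_dvd]
      exact_mod_cast Dvd.dvd.mul_left (Nat.gcd_dvd_right a b) 1
    have h2' : ((u * a' * b : ℤ) : ZMod l) = 0 := by
      rw [ZMod.intCast_zmod_eq_zero_iff_dvd]
      refine ⟨u, ?_⟩
      have : (l : ℤ) = a' * b := by exact_mod_cast hlb
      rw [this]; ring
    exact Prod.ext h1 h2'
  have hker3 : intPairHom (u * a') (v * b') a b (g : ℤ) = 0 := by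
    have h1 : ((u * a' * g : ℤ) : ZMod a) = 0 := by
      rw [ZMod.intCast_zmod_eq_zero_iff_dvd]; exact ⟨u, by rw [hA]; ring⟩
    have h2' : ((v * b' * g : ℤ) : ZMod b) = 0 := by
      rw [ZMod.intCast_zmod_eq_zero_iff_dvd]; exact ⟨v, by rw [hB]; ring⟩
    exact Prod.ext h1 h2'
  have hker4 : intPairHom (-1) 1 a b (l : ℤ) = 0 := by
    have h1 : ((-1 * l : ℤ) : ZMod a) = 0 := by
      rw [ZMod.intCast_zmod_eq_zero_iff_dvd]
      exact Dvd.dvd.mul_left (by exact_mod_cast Nat.dvd_lcm_left a b) (-1)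
    have h2' : ((1 * l : ℤ) : ZMod b) = 0 := by
      rw [ZMod.intCast_zmod_eq_zero_iff_dvd]
      exact Dvd.dvd.mul_left (by exact_mod_cast Nat.dvd_lcm_right a b) 1
    exact Prod.ext h1 h2'
  let Φ : ZMod a × ZMod b →+ ZMod g × ZMod l :=
    (ZMod.lift a ⟨intPairHom 1 (-(v * b')) g l, hker1⟩).coprod
      (ZMod.lift b ⟨intPairHom 1 (u * a') g l, hker2⟩)
  let Ψ : ZMod g × ZMod l →+ ZMod a × ZMod b :=
    (ZMod.lift g ⟨intPairHom (u * a') (v * b') a b, hker3⟩).coprod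
      (ZMod.lift l ⟨intPairHom (-1) 1 a b, hker4⟩)
  have hΦ : ∀ c d : ℤ, Φ ((c : ZMod a), (d : ZMod b)) =
      (((c + d : ℤ) : ZMod g), ((-(v * b') * c + u * a' * d : ℤ) : ZMod l)) := by
    intro c d
    show ZMod.lift a ⟨intPairHom 1 (-(v * b')) g l, hker1⟩ (c : ZMod a)
        + ZMod.lift b ⟨intPairHom 1 (u * a') g l, hker2⟩ (d : ZMod b) = _
    rw [ZMod.lift_coe, ZMod.lift_coe, intPairHom_apply, intPairHom_apply, Prod.mk_add_mk]
    refine Prod.ext ?_ ?_ <;> · show _ = _ ; push_cast ; ring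
  have hΨ : ∀ c d : ℤ, Ψ ((c : ZMod g), (d : ZMod l)) =
      (((u * a' * c + -1 * d : ℤ) : ZMod a), ((v * b' * c + 1 * d : ℤ) : ZMod b)) := by
    intro c d
    show ZMod.lift g ⟨intPairHom (u * a') (v * b') a b, hker3⟩ (c : ZMod g)
        + ZMod.lift l ⟨intPairHom (-1) 1 a b, hker4⟩ (d : ZMod l) = _
    rw [ZMod.lift_coe, ZMod.lift_coe, intPairHom_apply, intPairHom_apply, Prod.mk_add_mk]
    refine Prod.ext ?_ ?_ <;> · show _ = _ ; push_cast ; ring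
  refine ⟨Φ.toAddEquiv Ψ ?_ ?_⟩
  · refine AddMonoidHom.ext fun z => ?_
    obtain ⟨x, y⟩ := z
    obtain ⟨c, rfl⟩ := ZMod.intCast_surjective x
    obtain ⟨d, rfl⟩ := ZMod.intCast_surjective y
    rw [AddMonoidHom.comp_apply, AddMonoidHom.id_apply, hΦ, hΨ]
    have e1 : (u * a' * (c + d) + -1 * (-(v * b') * c + u * a' * d) : ℤ) = c := by
      linear_combination c * hone
    have e2 : (v * b' * (c + d) + 1 * (-(v * b') * c + u * a' * d) : ℤ) = d := by
      linear_combination d * hone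
    rw [e1, e2]
  · refine AddMonoidHom.ext fun z => ?_
    obtain ⟨x, y⟩ := z
    obtain ⟨c, rfl⟩ := ZMod.intCast_surjective x
    obtain ⟨d, rfl⟩ := ZMod.intCast_surjective y
    rw [AddMonoidHom.comp_apply, AddMonoidHom.id_apply, hΨ, hΦ]
    have e1 : (u * a' * c + -1 * d + (v * b' * c + 1 * d) : ℤ) = c := by
      linear_combination c * hone
    have e2 : (-(v * b') * (u * a' * c + -1 * d) + u * a' * (v * b' * c + 1 * d) : ℤ) = d := by
      linear_combination d * hone
    rw [e1, e2]

def zmodCongr {a b : ℕ} (h : a = b) : ZMod a ≃+ ZMod b := h ▸ AddEquiv.refl (ZMod a)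

/-- Additive version of `Fin.cons` pi splitting. -/
def addEquivPiCons {r : ℕ} (M : Fin (r + 1) → Type*) [∀ i, AddCommGroup (M i)] :
    (M 0 × ∀ j : Fin r, M j.succ) ≃+ ∀ i, M i where
  toFun p := Fin.cons p.1 p.2
  invFun x := (x 0, fun j => x j.succ)
  left_inv p := by simp
  right_inv x := funext fun i => Fin.cases rfl (fun j => by simp) i
  map_add' p q := funext fun i => Fin.cases rfl (fun j => by simp) i

def addEquivPiFin0 (M N : Fin 0 → Type*) [∀ i, AddCommGroup (M i)] [∀ i, AddCommGroup (N i)] :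
    (∀ i, M i) ≃+ ∀ i, N i where
  toFun _ := fun i => i.elim0
  invFun _ := fun i => i.elim0
  left_inv x := funext fun i => i.elim0
  right_inv x := funext fun i => i.elim0
  map_add' _ _ := funext fun i => i.elim0

lemma insert_chain (r : ℕ) : ∀ (m : Fin r → ℕ), (∀ i j, i ≤ j → m i ∣ m j) → ∀ b : ℕ,
    ∃ m' : Fin (r + 1) → ℕ, (∀ i j, i ≤ j → m' i ∣ m' j) ∧
      (∀ x : ℕ, x ∣ b → (∀ i, x ∣ m i) → x ∣ m' 0) ∧
      Nonempty ((ZMod b × ∀ i, ZMod (m i)) ≃+ ∀ i, ZMod (m' i)) := by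
  induction r with
  | zero =>
      intro m hm b
      refine ⟨fun _ => b, fun i j _ => dvd_rfl, fun x hx _ => hx, ?_⟩
      have e1 : (∀ i : Fin 0, ZMod (m i)) ≃+ (∀ j : Fin 0, ZMod b) := addEquivPiFin0 _ _
      exact ⟨(AddEquiv.refl (ZMod b)).prodCongr e1 |>.trans
        (addEquivPiCons (fun _ : Fin 1 => ZMod b))⟩
  | succ r IH =>
      intro m hm b
      set g := Nat.gcd (m 0) b with hgdef
      set l := Nat.lcm (m 0) b with hldef
      have htail : ∀ i j : Fin r, i ≤ j → m i.succ ∣ m j.succ := fun i j hij =>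
        hm i.succ j.succ (Fin.succ_le_succ_iff.2 hij)
      obtain ⟨m'', hchain, hdvd, ⟨e''⟩⟩ := IH (fun j => m j.succ) htail l
      refine ⟨Fin.cons (α := fun _ => ℕ) g m'', ?_, ?_, ?_⟩
      · intro i j
        refine Fin.cases ?_ (fun i' => ?_) i <;> refine Fin.cases ?_ (fun j' => ?_) j <;>
          intro hij
        · simp
        · simp only [Fin.cons_zero, Fin.cons_succ]
          have hg0 : g ∣ m'' 0 := hdvd g (Nat.gcd_dvd_left _ _ |>.trans (Nat.dvd_lcm_left _ _))
            (fun i => (Nat.gcd_dvd_left _ _).trans (hm 0 i.succ (by simp [Fin.le_def])))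
          exact hg0.trans (hchain 0 j' (Fin.zero_le _))
        · exact absurd hij (by simp [Fin.le_def])
        · simp only [Fin.cons_succ]
          exact hchain i' j' (Fin.succ_le_succ_iff.1 hij)
      · intro x hxb hxm
        simpa using Nat.dvd_gcd (hxm 0) hxb
      · obtain ⟨epair⟩ := zmod_pair_equiv (m 0) b
        have e1 : (ZMod b × ∀ i, ZMod (m i)) ≃+
            (ZMod b × (ZMod (m 0) × ∀ j : Fin r, ZMod (m j.succ))) :=
          (AddEquiv.refl _).prodCongr (addEquivPiCons (fun i => ZMod (m i))).symm
        have e2 : (ZMod b × (ZMod (m 0) × ∀ j : Fin r, ZMod (m j.succ))) ≃+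
            ((ZMod (m 0) × ZMod b) × ∀ j : Fin r, ZMod (m j.succ)) :=
          (AddEquiv.prodAssoc).symm.trans
            ((AddEquiv.prodComm.prodCongr (AddEquiv.refl _)))
        have e3 : ((ZMod (m 0) × ZMod b) × ∀ j : Fin r, ZMod (m j.succ)) ≃+
            ((ZMod g × ZMod l) × ∀ j : Fin r, ZMod (m j.succ)) :=
          epair.prodCongr (AddEquiv.refl _)
        have e4 : ((ZMod g × ZMod l) × ∀ j : Fin r, ZMod (m j.succ)) ≃+
            (ZMod g × (ZMod l × ∀ j : Fin r, ZMod (m j.succ))) := AddEquiv.prodAssoc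
        have e5 : (ZMod g × (ZMod l × ∀ j : Fin r, ZMod (m j.succ))) ≃+
            (ZMod g × ∀ j : Fin (r + 1), ZMod (m'' j)) := (AddEquiv.refl _).prodCongr e''
        have e6b : (ZMod (Fin.cons (α := fun _ => ℕ) g m'' (0 : Fin (r + 1 + 1))) ×
            ∀ j : Fin (r + 1), ZMod (Fin.cons (α := fun _ => ℕ) g m'' j.succ)) ≃+
            (∀ i : Fin (r + 1 + 1), ZMod (Fin.cons (α := fun _ => ℕ) g m'' i)) :=
          by exact addEquivPiCons (fun i : Fin (r + 1 + 1) => ZMod (Fin.cons (α := fun _ => ℕ) g m'' i))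
        have e6a : (ZMod g × ∀ j : Fin (r + 1), ZMod (m'' j)) ≃+
            (ZMod (Fin.cons (α := fun _ => ℕ) g m'' (0 : Fin (r + 1 + 1))) ×
              ∀ j : Fin (r + 1), ZMod (Fin.cons (α := fun _ => ℕ) g m'' j.succ)) :=
          AddEquiv.prodCongr (zmodCongr (Fin.cons_zero (α := fun _ => ℕ) g m'').symm)
            (AddEquiv.piCongrRight fun j => zmodCongr (Fin.cons_succ (α := fun _ => ℕ) g m'' j).symm)
        have e6 := e6a.trans e6b
        exact ⟨e1.trans (e2.trans (e3.trans (e4.trans (e5.trans e6))))⟩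

lemma chainify (r : ℕ) : ∀ d : Fin r → ℕ, ∃ m : Fin r → ℕ,
    (∀ i j, i ≤ j → m i ∣ m j) ∧ Nonempty ((∀ i, ZMod (d i)) ≃+ ∀ i, ZMod (m i)) := by
  induction r with
  | zero =>
      intro d
      exact ⟨fun _ => 0, fun i j _ => dvd_rfl, ⟨addEquivPiFin0 _ _⟩⟩
  | succ r IH =>
      intro d
      obtain ⟨mt, hmt, ⟨et⟩⟩ := IH (fun j => d j.succ)
      obtain ⟨m', hm', _, ⟨e'⟩⟩ := insert_chain r mt hmt (d 0)
      refine ⟨m', hm', ?_⟩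
      have e1 : (∀ i, ZMod (d i)) ≃+ (ZMod (d 0) × ∀ j : Fin r, ZMod (d j.succ)) :=
        (addEquivPiCons (fun i => ZMod (d i))).symm
      have e2 : (ZMod (d 0) × ∀ j : Fin r, ZMod (d j.succ)) ≃+
          (ZMod (d 0) × ∀ j : Fin r, ZMod (mt j)) := (AddEquiv.refl _).prodCongr et
      exact ⟨e1.trans (e2.trans e')⟩

open Finset in
lemma finset_gcd_bezout {ι : Type*} [DecidableEq ι] (t : Finset ι) (d : ι → ℕ) :
    ∃ u : ι → ℤ, ∑ j ∈ t, u j * d j = t.gcd d := by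
  induction t using Finset.induction with
  | empty => exact ⟨fun _ => 0, by simp⟩
  | @insert a t ha IH =>
      obtain ⟨u, hu⟩ := IH
      set G := t.gcd d with hG
      refine ⟨fun j => if j = a then Nat.gcdA (d a) G else Nat.gcdB (d a) G * u j, ?_⟩
      rw [Finset.sum_insert ha, Finset.gcd_insert]
      have hsum : ∑ j ∈ t, (if j = a then Nat.gcdA (d a) G else Nat.gcdB (d a) G * u j) * d j
          = Nat.gcdB (d a) G * ∑ j ∈ t, u j * d j := by
        rw [Finset.mul_sum]
        refine Finset.sum_congr rfl fun j hj => ?_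
        rw [if_neg (by rintro rfl; exact ha hj)]; ring
      rw [hsum, hu]
      beta_reduce
      rw [if_pos rfl]
      have hbez := Nat.gcd_eq_gcd_ab (d a) G
      have hnorm : GCDMonoid.gcd (d a) (t.gcd d) = Nat.gcd (d a) G := rfl
      rw [hnorm, hbez]
      ring

/-- Core structure lemma obtained from Smith normal form. -/
lemma snf_main (k : ℕ) (S : Submodule ℤ (Fin k → ℤ)) :
    ∃ (d : Fin k → ℕ) (φ : (Fin k → ℤ) →+ (∀ j, ZMod (d j))),
      Function.Surjective φ ∧ (∀ x, φ x = 0 ↔ x ∈ S) ∧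
      (Finset.univ.gcd d = 1 → ∃ a ∈ S, ∃ g : (Fin k → ℤ) →+ ℤ, g a = 1) ∧
      (∀ p : ℕ, (∀ j, p ∣ d j) → ∀ s ∈ S, ∃ t, s = (p : ℤ) • t) := by
  obtain ⟨n, ⟨bM, bN, f, a, snf⟩⟩ := Submodule.smithNormalForm (Pi.basisFun ℤ (Fin k)) S
  classical
  have ha : ∀ i, a i ≠ 0 := by
    intro i h
    have h0 : (bN i : Fin k → ℤ) = 0 := by rw [snf i, h, zero_smul]
    exact bN.ne_zero i (Subtype.ext h0)
  set d : Fin k → ℕ := fun j => if h : ∃ i, f i = j then (a h.choose).natAbs else 0 with hd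
  have hdf : ∀ i, d (f i) = (a i).natAbs := by
    intro i
    have hex : ∃ i', f i' = f i := ⟨i, rfl⟩
    have : hex.choose = i := f.injective hex.choose_spec
    simp only [hd, dif_pos hex, this]
  have hd0 : ∀ j, (¬ ∃ i, f i = j) → d j = 0 := fun j h => by simp only [hd, dif_neg h]
  -- computation of repr of S-combinations
  have hrepr : ∀ (c : Fin n → ℤ) (j : Fin k),
      bM.repr (∑ i, c i • ((a i) • bM (f i))) j = ∑ i, (if f i = j then c i * a i else 0) := by
    intro c j
    rw [map_sum, Finsupp.finset_sum_apply]
    refine Finset.sum_congr rfl fun i _ => ?_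
    rw [map_smul, map_smul, bM.repr_self]
    rw [Finsupp.smul_apply, Finsupp.smul_apply, Finsupp.single_apply]
    by_cases h : f i = j <;> simp [h, mul_comm]
  -- the membership characterization
  have hchar : ∀ x, x ∈ S ↔ ∀ j, (d j : ℤ) ∣ bM.repr x j := by
    intro x
    constructor
    · intro hx j
      have hxS : (⟨x, hx⟩ : S) = ∑ i, bN.repr ⟨x, hx⟩ i • bN i := (bN.sum_repr _).symm
      have hxM : x = ∑ i, bN.repr ⟨x, hx⟩ i • ((a i) • bM (f i)) := by
        have := congrArg (Submodule.subtype S) hxS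
        rw [map_sum] at this
        simpa only [map_smul, Submodule.subtype_apply, snf] using this
      rw [hxM, hrepr]
      by_cases hj : ∃ i, f i = j
      · obtain ⟨i0, hi0⟩ := hj
        rw [Finset.sum_eq_single i0]
        · rw [if_pos hi0, ← hi0, hdf i0, Int.natAbs_dvd]
          exact dvd_mul_left _ _
        · intro i _ hne
          rw [if_neg]; intro hfi; exact hne (f.injective (hfi.trans hi0.symm))
        · intro h; exact absurd (Finset.mem_univ i0) h
      · rw [hd0 j hj, Nat.cast_zero]
        rw [Finset.sum_eq_zero]
        intro i _
        rw [if_neg (fun hfi => hj ⟨i, hfi⟩)]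
    · intro hdvd
      set c : Fin n → ℤ := fun i => bM.repr x (f i) / a i with hc
      have hy : (∑ i, c i • ((a i) • bM (f i))) ∈ S := by
        apply Submodule.sum_mem
        intro i _
        rw [← snf i]
        exact Submodule.smul_mem _ _ (bN i).2
      have hxy : x = ∑ i, c i • ((a i) • bM (f i)) := by
        apply bM.repr.injective
        ext j
        rw [hrepr]
        by_cases hj : ∃ i, f i = j
        · obtain ⟨i0, hi0⟩ := hj
          rw [Finset.sum_eq_single i0]
          · rw [if_pos hi0]
            have hdvd0 : a i0 ∣ bM.repr x (f i0) := by
              rw [← Int.natAbs_dvd, ← hdf i0]; exact hdvd (f i0)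
            show bM.repr x j = bM.repr x (f i0) / a i0 * a i0
            rw [hi0] at hdvd0
            rw [hi0, Int.ediv_mul_cancel hdvd0]
          · intro i _ hne
            rw [if_neg]; intro hfi; exact hne (f.injective (hfi.trans hi0.symm))
          · intro h; exact absurd (Finset.mem_univ i0) h
        · have h0 : (d j : ℤ) ∣ bM.repr x j := hdvd j
          rw [hd0 j hj] at h0
          norm_num at h0
          rw [h0, Finset.sum_eq_zero]
          intro i _
          rw [if_neg (fun hfi => hj ⟨i, hfi⟩)]
      rw [hxy]; exact hy
  set φ : (Fin k → ℤ) →+ (∀ j, ZMod (d j)) :=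
    AddMonoidHom.mk' (fun x => fun j => ((bM.repr x j : ℤ) : ZMod (d j)))
      (by
        intro x y
        funext j
        show (((bM.repr (x + y)) j : ℤ) : ZMod (d j)) =
          (((bM.repr x) j : ℤ) : ZMod (d j)) + (((bM.repr y) j : ℤ) : ZMod (d j))
        rw [map_add, Finsupp.add_apply, Int.cast_add]) with hφ
  have hφapp : ∀ x j, φ x j = ((bM.repr x j : ℤ) : ZMod (d j)) := fun x j => rfl
  refine ⟨d, φ, ?_, ?_, ?_, ?_⟩
  · intro y
    choose c hcy using fun j => ZMod.intCast_surjective (n := d j) (y j)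
    refine ⟨∑ j, c j • bM j, ?_⟩
    funext j
    rw [hφapp, Module.Basis.repr_sum_self, hcy]
  · intro x
    rw [hchar]
    constructor
    · intro h j
      have hj := congrFun h j
      rw [hφapp] at hj
      exact (ZMod.intCast_zmod_eq_zero_iff_dvd _ _).1 hj
    · intro h
      funext j
      show (((bM.repr x) j : ℤ) : ZMod (d j)) = 0
      rw [ZMod.intCast_zmod_eq_zero_iff_dvd]
      exact h j
  · intro hgcd
    obtain ⟨u, hu⟩ := finset_gcd_bezout Finset.univ d
    rw [hgcd] at hu
    set s : Fin k → ℤ := ∑ j, (d j : ℤ) • bM j with hs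
    have hsS : s ∈ S := by
      rw [hchar]
      intro j
      rw [hs, Module.Basis.repr_sum_self]
    refine ⟨s, hsS, AddMonoidHom.mk' (fun x => ∑ j, u j * bM.repr x j) ?_, ?_⟩
    · intro x y
      rw [← Finset.sum_add_distrib]
      refine Finset.sum_congr rfl fun j _ => ?_
      rw [map_add, Finsupp.add_apply]; ring
    · show (∑ j, u j * bM.repr s j) = 1
      have : ∀ j, bM.repr s j = (d j : ℤ) := by
        intro j; rw [hs, Module.Basis.repr_sum_self]
      rw [Finset.sum_congr rfl fun j _ => by rw [this j]]
      exact_mod_cast hu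
  · intro p hp s hsS
    have hdvdp : ∀ j, (p : ℤ) ∣ bM.repr s j := by
      intro j
      exact dvd_trans (Int.natCast_dvd_natCast.2 (hp j)) ((hchar s).1 hsS j)
    refine ⟨∑ j, (bM.repr s j / p) • bM j, ?_⟩
    have hss : s = ∑ j, bM.repr s j • bM j := by
      conv_lhs => rw [← bM.sum_repr s]
    conv_lhs => rw [hss]
    rw [Finset.smul_sum]
    refine Finset.sum_congr rfl fun j _ => ?_
    rw [smul_smul, Int.mul_ediv_cancel' (hdvdp j)]

lemma equiv_of_surj {k : ℕ} {A : Type*} [AddCommGroup A] (π : (Fin k → ℤ) →+ A)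
    (hsurj : Function.Surjective π) (S : Submodule ℤ (Fin k → ℤ)) (hker : ∀ x, π x = 0 ↔ x ∈ S)
    {d : Fin k → ℕ} (φ : (Fin k → ℤ) →+ (∀ j, ZMod (d j))) (hφs : Function.Surjective φ)
    (hφk : ∀ x, φ x = 0 ↔ x ∈ S) : Nonempty (A ≃+ ∀ j, ZMod (d j)) := by
  have hkk : π.ker = φ.ker := by
    ext x
    rw [AddMonoidHom.mem_ker, AddMonoidHom.mem_ker, hker, hφk]
  exact ⟨((QuotientAddGroup.quotientKerEquivOfSurjective π hsurj).symm.trans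
    (QuotientAddGroup.quotientAddEquivOfEq hkk)).trans
    (QuotientAddGroup.quotientKerEquivOfSurjective φ hφs)⟩

lemma exists_surj_of_primitive {k' : ℕ} {A : Type*} [AddCommGroup A]
    (π : (Fin (k' + 1) → ℤ) →+ A) (hsurj : Function.Surjective π)
    (a : Fin (k' + 1) → ℤ) (ha : π a = 0)
    (g : (Fin (k' + 1) → ℤ) →+ ℤ) (hg : g a = 1) :
    ∃ π' : (Fin k' → ℤ) →+ A, Function.Surjective π' := by
  set K := LinearMap.ker g.toIntLinearMap with hK
  have hmemK : ∀ x, x ∈ K ↔ g x = 0 := fun x => LinearMap.mem_ker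
  -- the splitting equivalence
  have hgz : ∀ (c : ℤ) (x : Fin (k' + 1) → ℤ), g (c • x) = c * g x := fun c x => by
    rw [map_zsmul, smul_eq_mul]
  let E : (Fin (k' + 1) → ℤ) ≃ₗ[ℤ] ℤ × K :=
    { toFun := fun x => (g x, ⟨x - g x • a, by
        rw [hmemK]
        show g (x - g x • a) = 0
        rw [map_sub, hgz, hg, mul_one, sub_self]⟩)
      invFun := fun p => p.1 • a + (p.2 : Fin (k' + 1) → ℤ)
      map_add' := by
        intro x y
        refine Prod.ext (map_add g x y) (Subtype.ext ?_)
        show (x + y) - g (x + y) • a = (x - g x • a) + (y - g y • a)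
        rw [map_add, add_smul]; abel
      map_smul' := by
        intro c x
        refine Prod.ext ?_ (Subtype.ext ?_)
        · show g (c • x) = (RingHom.id ℤ) c • g x
          rw [hgz]; exact (smul_eq_mul ..).symm
        show c • x - g (c • x) • a = c • (x - g x • a)
        rw [hgz, smul_sub, smul_smul, mul_comm]
      left_inv := fun x => by
        show g x • a + (x - g x • a) = x
        abel
      right_inv := fun p => by
        refine Prod.ext ?_ (Subtype.ext ?_)
        · show g (p.1 • a + (p.2 : Fin (k' + 1) → ℤ)) = p.1
          rw [map_add, hgz, hg, mul_one, (hmemK _).1 p.2.2, add_zero]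
        · show (p.1 • a + (p.2 : Fin (k' + 1) → ℤ)) - g (p.1 • a + (p.2 : _)) • a
            = (p.2 : Fin (k' + 1) → ℤ)
          rw [map_add, hgz, hg, mul_one, (hmemK _).1 p.2.2, add_zero]
          abel }
  obtain ⟨n, bK⟩ := Submodule.basisOfPid (Pi.basisFun ℤ (Fin (k' + 1))) K
  have hcard : k' + 1 = 1 + n := by
    have e := (Pi.basisFun ℤ (Fin (k' + 1))).indexEquiv
      (((Module.Basis.singleton Unit ℤ).prod bK).map E.symm)
    have := Fintype.card_congr e
    simpa using this
  have hn : n = k' := by omega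
  subst hn
  refine ⟨(π.comp K.subtype.toAddMonoidHom).comp
    (bK.equivFun.symm : (Fin n → ℤ) ≃ₗ[ℤ] K).toLinearMap.toAddMonoidHom, ?_⟩
  intro α
  obtain ⟨x, rfl⟩ := hsurj α
  have hy : x - g x • a ∈ K := by
    rw [hmemK]
    show g (x - g x • a) = 0
    rw [map_sub, hgz, hg, mul_one, sub_self]
  refine ⟨bK.equivFun ⟨x - g x • a, hy⟩, ?_⟩
  simp only [AddMonoidHom.comp_apply, LinearMap.toAddMonoidHom_coe,
    LinearEquiv.coe_coe, LinearEquiv.symm_apply_apply]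
  show π (x - g x • a) = π x
  rw [map_sub, map_zsmul, ha, smul_zero, sub_zero]

lemma card_le_of_surj_pi_zmod {r k p : ℕ} (hp : p.Prime) (m : Fin r → ℕ)
    (ψ : (∀ i, ZMod (m i)) →+ (Fin k → ZMod p)) (hs : Function.Surjective ψ) : k ≤ r := by
  haveI : Fact p.Prime := ⟨hp⟩
  classical
  set w : Fin r → (Fin k → ZMod p) := fun i => ψ (Pi.single i 1) with hw
  have hgen : ∀ v : Fin k → ZMod p, ∃ c : Fin r → ℤ, v = ∑ i, c i • w i := by
    intro v
    obtain ⟨y, rfl⟩ := hs v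
    choose c hc using fun i => ZMod.intCast_surjective (n := m i) (y i)
    refine ⟨c, ?_⟩
    have hy : y = ∑ i, c i • Pi.single i (1 : ZMod (m i)) := by
      funext i'
      rw [Finset.sum_apply]
      rw [Finset.sum_eq_single i']
      · rw [Pi.smul_apply, Pi.single_eq_same, zsmul_eq_mul, mul_one, hc]
      · intro i _ hne
        rw [Pi.smul_apply, Pi.single_eq_of_ne (Ne.symm hne), smul_zero]
      · intro h; exact absurd (Finset.mem_univ i') h
    conv_lhs => rw [hy]
    rw [map_sum]
    refine Finset.sum_congr rfl fun i _ => ?_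
    rw [map_zsmul]
  have hspan : Submodule.span (ZMod p) (Set.range w) = ⊤ := by
    rw [Submodule.eq_top_iff']
    intro v
    obtain ⟨c, rfl⟩ := hgen v
    apply Submodule.sum_mem
    intro i _
    rw [← Int.cast_smul_eq_zsmul (ZMod p)]
    exact Submodule.smul_mem _ _ (Submodule.subset_span (Set.mem_range_self i))
  have h1 : Module.finrank (ZMod p) (Fin k → ZMod p) = k := by
    rw [Module.finrank_pi]; simp
  have h2 := finrank_span_le_card (R := ZMod p) (Set.range w)
  rw [hspan] at h2
  rw [finrank_top] at h2
  rw [h1] at h2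
  refine h2.trans ?_
  rw [Set.toFinset_range]
  exact (Finset.card_image_le).trans (by simp)

/-- From any surjection `ℤ^k → A` we get a chain decomposition with `k` factors. -/
lemma mem_ifc_set_of_surj {k : ℕ} {A : Type*} [AddCommGroup A] (π : (Fin k → ℤ) →+ A)
    (hsurj : Function.Surjective π) :
    k ∈ {r : ℕ | ∃ m : Fin r → ℕ, (∀ i j : Fin r, i ≤ j → m i ∣ m j) ∧
      Nonempty (A ≃+ ((i : Fin r) → ZMod (m i)))} := by
  set S : Submodule ℤ (Fin k → ℤ) := AddSubgroup.toIntSubmodule π.ker with hS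
  have hker : ∀ x, π x = 0 ↔ x ∈ S := fun x => Iff.rfl
  obtain ⟨d, φ, hφs, hφk, -, -⟩ := snf_main k S
  obtain ⟨eA⟩ := equiv_of_surj π hsurj S hker φ hφs hφk
  obtain ⟨m, hchain, ⟨em⟩⟩ := chainify k d
  exact ⟨m, hchain, ⟨eA.trans em⟩⟩

/-- Given a short exact sequence `0 → S → ℤᵏ → A → 0` of abelian groups, the number of
invariant factors of `A` is strictly smaller than `k` iff `S` contains an element which
is primitive in `ℤᵏ`. -/
theorem invariantFactorCount_lt_iff_exists_primitive
    (k : ℕ) (A : Type*) [AddCommGroup A] (S : AddSubgroup (Fin k → ℤ))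
    (π : (Fin k → ℤ) →+ A) (hsurj : Function.Surjective π) (hker : π.ker = S) :
    invariantFactorCount A < k ↔ ∃ a ∈ S, IsPrimitive a := by
  classical
  set T := {r : ℕ | ∃ m : Fin r → ℕ, (∀ i j : Fin r, i ≤ j → m i ∣ m j) ∧
    Nonempty (A ≃+ ((i : Fin r) → ZMod (m i)))} with hT
  have hTk : k ∈ T := mem_ifc_set_of_surj π hsurj
  have hTne : T.Nonempty := ⟨k, hTk⟩
  have hIFC : invariantFactorCount A = sInf T := rfl
  constructor
  · intro hlt
    rw [hIFC] at hlt
    by_contra hnp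
    -- no primitive element in S
    set SM : Submodule ℤ (Fin k → ℤ) := AddSubgroup.toIntSubmodule S with hSM
    have hmem : ∀ x, x ∈ SM ↔ x ∈ S := fun x => Iff.rfl
    have hker' : ∀ x, π x = 0 ↔ x ∈ SM := by
      intro x
      rw [hmem, ← hker]
      exact Iff.rfl
    obtain ⟨d, φ, hφs, hφk, hgcd1, hpdvd⟩ := snf_main k SM
    have hG : Finset.univ.gcd d ≠ 1 := by
      intro h
      obtain ⟨a, haS, g, hg⟩ := hgcd1 h
      exact hnp ⟨a, (hmem a).1 haS, g, hg⟩
    set p := (Finset.univ.gcd d).minFac with hpdef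
    have hp : p.Prime := Nat.minFac_prime hG
    have hpd : ∀ j, p ∣ d j := fun j =>
      (Nat.minFac_dvd _).trans (Finset.gcd_dvd (Finset.mem_univ j))
    -- reduction mod p on standard coordinates
    set φp : (Fin k → ℤ) →+ (Fin k → ZMod p) :=
      AddMonoidHom.mk' (fun x => fun j => ((x j : ℤ) : ZMod p))
        (by intro x y; funext j; show (((x + y) j : ℤ) : ZMod p) = _; rw [Pi.add_apply,
          Int.cast_add]; rfl) with hφp
    have hφpapp : ∀ x j, φp x j = ((x j : ℤ) : ZMod p) := fun x j => rfl
    have hφpsurj : Function.Surjective φp := by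
      intro v
      choose c hc using fun j => ZMod.intCast_surjective (n := p) (v j)
      exact ⟨c, funext fun j => hc j⟩
    have hSker : ∀ x ∈ π.ker, φp x = 0 := by
      intro x hx
      have hxSM : x ∈ SM := (hker' x).1 hx
      obtain ⟨t, rfl⟩ := hpdvd p hpd x hxSM
      funext j
      rw [hφpapp]
      show ((((p : ℤ) • t) j : ℤ) : ZMod p) = 0
      rw [Pi.smul_apply, smul_eq_mul, Int.cast_mul]
      simp
    let e := QuotientAddGroup.quotientKerEquivOfSurjective π hsurj
    let ψ : A →+ (Fin k → ZMod p) :=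
      (QuotientAddGroup.lift π.ker φp hSker).comp e.symm.toAddMonoidHom
    have hψsurj : Function.Surjective ψ := by
      intro v
      obtain ⟨x, hx⟩ := hφpsurj v
      refine ⟨π x, ?_⟩
      show (QuotientAddGroup.lift π.ker φp hSker) (e.symm (π x)) = v
      have : e.symm (π x) = QuotientAddGroup.mk x := by
        apply e.injective
        rw [AddEquiv.apply_symm_apply]
        rfl
      rw [this]
      refine (QuotientAddGroup.lift_mk (φ := φp) (HN := hSker) (g := x)).trans ?_
      exact hx
    obtain ⟨m, -, ⟨em⟩⟩ := Nat.sInf_mem hTne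
    have hk : k ≤ sInf T :=
      card_le_of_surj_pi_zmod hp m (ψ.comp em.symm.toAddMonoidHom)
        (hψsurj.comp em.symm.surjective)
    omega
  · rintro ⟨a, haS, g, hg⟩
    cases k with
    | zero =>
        exfalso
        have ha0 : a = 0 := funext fun i => i.elim0
        rw [ha0, map_zero] at hg
        exact one_ne_zero hg.symm
    | succ k' =>
        have haK : π a = 0 := by
          have : a ∈ π.ker := hker ▸ haS
          exact this
        obtain ⟨π', hπ's⟩ := exists_surj_of_primitive π hsurj a haK g hg
        have hk' : k' ∈ T := mem_ifc_set_of_surj π' hπ's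
        rw [hIFC]
        exact lt_of_le_of_lt (Nat.sInf_le hk') (Nat.lt_succ_self k')
end

section
/- Let $X$ and $Y$ be topological spaces with basepoints $x_0 \in X$, $y_0 \in Y$. The wedge sum $X \vee Y$ has the fixed point property if and only if both $X$ and $Y$ have the fixed point property, provided $X$ and $Y$ each have the property that the basepoint inclusion admits a retraction (e.g., they are path-connected polyhedra, so that $X$ and $Y$ are retracts of $X \vee Y$). -/
/-- A topological space has the fixed point property if every continuous
self-map has a fixed point. -/
def HasFixedPointProperty (X : Type*) [TopologicalSpace X] : Prop :=
  ∀ f : X → X, Continuous f → ∃ x, f x = x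

/-- The wedge sum `X ∨ Y`: the quotient of the disjoint union `X ⊕ Y`
identifying the basepoints `x₀` and `y₀`. -/
def WedgeSum {X Y : Type*} (x₀ : X) (y₀ : Y) : Type _ :=
  Quot (fun a b : X ⊕ Y => a = Sum.inl x₀ ∧ b = Sum.inr y₀)

instance {X Y : Type*} [TopologicalSpace X] [TopologicalSpace Y] (x₀ : X) (y₀ : Y) :
    TopologicalSpace (WedgeSum x₀ y₀) :=
  instTopologicalSpaceQuot

section Aux

variable {X Y : Type*} [TopologicalSpace X] [TopologicalSpace Y] (x₀ : X) (y₀ : Y)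

/-- Inclusion of `X` into the wedge sum. -/
def wedgeInlAux : X → WedgeSum x₀ y₀ := fun x => Quot.mk _ (Sum.inl x)

/-- Inclusion of `Y` into the wedge sum. -/
def wedgeInrAux : Y → WedgeSum x₀ y₀ := fun y => Quot.mk _ (Sum.inr y)

/-- Retraction onto `X`, collapsing `Y` to the basepoint. -/
def wedgeRetrLAux : WedgeSum x₀ y₀ → X :=
  Quot.lift (Sum.elim id (fun _ => x₀)) (by rintro a b ⟨rfl, rfl⟩; rfl)

/-- Retraction onto `Y`, collapsing `X` to the basepoint. -/
def wedgeRetrRAux : WedgeSum x₀ y₀ → Y :=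
  Quot.lift (Sum.elim (fun _ => y₀) id) (by rintro a b ⟨rfl, rfl⟩; rfl)

lemma wedgeInlAux_continuous : Continuous (wedgeInlAux x₀ y₀) :=
  continuous_quot_mk.comp continuous_inl

lemma wedgeInrAux_continuous : Continuous (wedgeInrAux x₀ y₀) :=
  continuous_quot_mk.comp continuous_inr

lemma wedgeRetrLAux_continuous : Continuous (wedgeRetrLAux x₀ y₀) :=
  continuous_quot_lift _ (continuous_id.sumElim continuous_const)

lemma wedgeRetrRAux_continuous : Continuous (wedgeRetrRAux x₀ y₀) :=
  continuous_quot_lift _ (continuous_const.sumElim continuous_id)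

lemma wedgeRetrL_inl (x : X) : wedgeRetrLAux x₀ y₀ (wedgeInlAux x₀ y₀ x) = x := rfl

lemma wedgeRetrL_inr (y : Y) : wedgeRetrLAux x₀ y₀ (wedgeInrAux x₀ y₀ y) = x₀ := rfl

lemma wedgeRetrR_inr (y : Y) : wedgeRetrRAux x₀ y₀ (wedgeInrAux x₀ y₀ y) = y := rfl

lemma wedgeRetrR_inl (x : X) : wedgeRetrRAux x₀ y₀ (wedgeInlAux x₀ y₀ x) = y₀ := rfl

lemma wedge_basepoint_eq :
    wedgeInlAux x₀ y₀ x₀ = wedgeInrAux x₀ y₀ y₀ :=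
  Quot.sound ⟨rfl, rfl⟩

end Aux

/-- For compact Hausdorff path-connected spaces `X` and `Y` (so that each of `X` and `Y` is a
retract of `X ∨ Y`), the wedge sum `X ∨ Y` has the fixed point property if and only if both
`X` and `Y` have the fixed point property. -/
theorem wedgeSum_hasFixedPointProperty_iff
    {X Y : Type*} [TopologicalSpace X] [TopologicalSpace Y]
    [CompactSpace X] [CompactSpace Y] [T2Space X] [T2Space Y]
    [PathConnectedSpace X] [PathConnectedSpace Y] (x₀ : X) (y₀ : Y) :
    HasFixedPointProperty (WedgeSum x₀ y₀) ↔
      HasFixedPointProperty X ∧ HasFixedPointProperty Y := by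
  constructor
  · intro hW
    constructor
    · intro f hf
      obtain ⟨w, hw⟩ := hW (wedgeInlAux x₀ y₀ ∘ f ∘ wedgeRetrLAux x₀ y₀)
        ((wedgeInlAux_continuous x₀ y₀).comp (hf.comp (wedgeRetrLAux_continuous x₀ y₀)))
      refine ⟨wedgeRetrLAux x₀ y₀ w, ?_⟩
      conv_rhs => rw [← hw]
      rfl
    · intro f hf
      obtain ⟨w, hw⟩ := hW (wedgeInrAux x₀ y₀ ∘ f ∘ wedgeRetrRAux x₀ y₀)
        ((wedgeInrAux_continuous x₀ y₀).comp (hf.comp (wedgeRetrRAux_continuous x₀ y₀)))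
      refine ⟨wedgeRetrRAux x₀ y₀ w, ?_⟩
      conv_rhs => rw [← hw]
      rfl
  · rintro ⟨hX, hY⟩ f hf
    -- fixed point of the induced map on X
    obtain ⟨x, hx⟩ := hX (wedgeRetrLAux x₀ y₀ ∘ f ∘ wedgeInlAux x₀ y₀)
      ((wedgeRetrLAux_continuous x₀ y₀).comp (hf.comp (wedgeInlAux_continuous x₀ y₀)))
    obtain ⟨y, hy⟩ := hY (wedgeRetrRAux x₀ y₀ ∘ f ∘ wedgeInrAux x₀ y₀)
      ((wedgeRetrRAux_continuous x₀ y₀).comp (hf.comp (wedgeInrAux_continuous x₀ y₀)))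
    obtain ⟨sx, hsx⟩ := Quot.exists_rep (f (wedgeInlAux x₀ y₀ x))
    obtain ⟨sy, hsy⟩ := Quot.exists_rep (f (wedgeInrAux x₀ y₀ y))
    rcases sx with a | b
    · -- f (inl x) = inl a, and retraction gives a = x
      refine ⟨wedgeInlAux x₀ y₀ x, ?_⟩
      have ha : a = x := by
        have := hx
        simp only [Function.comp_apply] at this
        rw [← hsx] at this
        exact this
      rw [← hsx, ha]; rfl
    · -- f (inl x) = inr b, so x = x₀
      have hx0 : x = x₀ := by
        have := hx
        simp only [Function.comp_apply] at this
        rw [← hsx] at this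
        exact this.symm
      rcases sy with a' | b'
      · -- f (inr y) = inl a', so y = y₀
        have hy0 : y = y₀ := by
          have := hy
          simp only [Function.comp_apply] at this
          rw [← hsy] at this
          exact this.symm
        -- now f(basepoint) = inr b and = inl a'; apply retraction L to get a' = x₀
        have hbase : f (wedgeInlAux x₀ y₀ x₀) = f (wedgeInrAux x₀ y₀ y₀) := by
          rw [wedge_basepoint_eq]
        rw [hx0] at hsx
        rw [hy0] at hsy
        have h1 : f (wedgeInlAux x₀ y₀ x₀) = wedgeInrAux x₀ y₀ b := hsx.symm
        have h2 : f (wedgeInrAux x₀ y₀ y₀) = wedgeInlAux x₀ y₀ a' := hsy.symm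
        have h3 : wedgeInrAux x₀ y₀ b = wedgeInlAux x₀ y₀ a' := by
          rw [← h1, ← h2, hbase]
        have ha' : a' = x₀ := by
          have := congrArg (wedgeRetrLAux x₀ y₀) h3
          exact this.symm
        refine ⟨wedgeInlAux x₀ y₀ x₀, ?_⟩
        rw [h1, h3, ha']
      · -- f (inr y) = inr b', retraction gives b' = y
        refine ⟨wedgeInrAux x₀ y₀ y, ?_⟩
        have hb : b' = y := by
          have := hy
          simp only [Function.comp_apply] at this
          rw [← hsy] at this
          exact this
        rw [← hsy, hb]; rfl
end
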